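/- There is a universal constant $c' > 0$ such that for every symmetric convex body $K \subset \mathbb{R}^n$, the ratio of the mean to the maximum of $\|\cdot\|_K$ over the unit sphere satisfies $\frac{M(K)}{b(K)} \ge \frac{c'}{\sqrt{n}}$. -/

import Mathlib

noncomputable section
open MeasureTheory Metric
open scoped ENNReal RealInnerProductSpace Topology

/-- `Euc n` is the Euclidean space `ℝⁿ`. -/
abbrev Euc (n : ℕ) := EuclideanSpace ℝ (Fin n)

/-- The unit sphere `S^{n-1} ⊂ ℝⁿ`. -/
abbrev Sph (n : ℕ) := Metric.sphere (0 : Euc n) 1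

/-- A rotation (linear isometry) of `ℝⁿ` restricted to the unit sphere. -/
def sphereRot {n : ℕ} (g : Euc n ≃ₗᵢ[ℝ] Euc n) (x : Sph n) : Sph n :=
  ⟨g x, by
    have hx : ‖(x : Euc n)‖ = 1 := by simpa using mem_sphere_zero_iff_norm.mp x.2
    simp [mem_sphere_zero_iff_norm, g.norm_map, hx]⟩

/-- `ν` is the normalized Haar (uniform, rotation invariant probability) measure
on the unit sphere. -/
def IsHaarSphere {n : ℕ} (ν : Measure (Sph n)) : Prop :=
  IsProbabilityMeasure ν ∧ ∀ g : Euc n ≃ₗᵢ[ℝ] Euc n, ν.map (sphereRot g) = ν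

/-- `projNorm V x = |P_V x|`, the Euclidean norm of the orthogonal projection of `x`
onto the subspace `V`. -/
def projNorm {n : ℕ} (V : Submodule ℝ (Euc n)) (x : Euc n) : ℝ :=
  ‖(Submodule.orthogonalProjection V x : Euc n)‖

/-- The orthogonal projection onto `V` as a continuous linear map `ℝⁿ → ℝⁿ`. -/
def projCLM {n : ℕ} (V : Submodule ℝ (Euc n)) : Euc n →L[ℝ] Euc n :=
  V.subtypeL.comp (Submodule.orthogonalProjection V)

/-- The Grassmannian `G_{n,k}` of `k`-dimensional linear subspaces of `ℝⁿ`. -/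
def Gr (n k : ℕ) := {V : Submodule ℝ (Euc n) // Module.finrank ℝ V = k}

/-- Borel measurable structure on the Grassmannian, induced by the embedding
`V ↦ P_V` into the space of continuous linear maps. -/
instance {n k : ℕ} : MeasurableSpace (Gr n k) :=
  MeasurableSpace.comap (fun V => projCLM V.1) (borel _)

/-- The action of a rotation of `ℝⁿ` on the Grassmannian. -/
def grRot {n k : ℕ} (g : Euc n ≃ₗᵢ[ℝ] Euc n) (V : Gr n k) : Gr n k :=
  ⟨V.1.map g.toLinearEquiv.toLinearMap,
    (LinearEquiv.finrank_map_eq g.toLinearEquiv V.1).trans V.2⟩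

/-- `μ` is the normalized Haar (rotation invariant probability) measure on the
Grassmannian `G_{n,k}`. -/
def IsHaarGrass {n k : ℕ} (μ : Measure (Gr n k)) : Prop :=
  IsProbabilityMeasure μ ∧ ∀ g : Euc n ≃ₗᵢ[ℝ] Euc n, μ.map (grRot g) = μ


set_option maxHeartbeats 1000000
section Aux
variable {n : ℕ}

lemma sphereRot_cont (g : Euc n ≃ₗᵢ[ℝ] Euc n) : Continuous (sphereRot g) :=
  Continuous.subtype_mk (g.continuous.comp continuous_subtype_val) _

lemma integ_cont {ν : Measure (Sph n)} [IsProbabilityMeasure ν] {f : Euc n → ℝ}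
    (hf : Continuous f) : Integrable (fun x : Sph n => f x) ν := by
  have : Continuous (fun x : Sph n => f x) := hf.comp continuous_subtype_val
  exact this.integrable_of_hasCompactSupport
    (IsCompact.of_isClosed_subset isCompact_univ (isClosed_tsupport _) (Set.subset_univ _))

lemma haar_int_inv {ν : Measure (Sph n)} (hν : IsHaarSphere ν) (g : Euc n ≃ₗᵢ[ℝ] Euc n)
    (f : Euc n → ℝ) (hf : Continuous f) :
    ∫ x : Sph n, f (g x) ∂ν = ∫ x : Sph n, f x ∂ν := by
  conv_rhs => rw [← hν.2 g]
  rw [integral_map (sphereRot_cont g).measurable.aemeasurable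
    (f := fun y : Sph n => f ↑y) ((hf.comp continuous_subtype_val).aestronglyMeasurable)]
  rfl

/-- existence of an isometry sending one orthonormal pair to another -/
lemma exists_rot_pair {u₁ u₂ v₁ v₂ : Euc n} (hu₁ : ‖u₁‖ = 1) (hu₂ : ‖u₂‖ = 1)
    (hv₁ : ‖v₁‖ = 1) (hv₂ : ‖v₂‖ = 1) (hu : ⟪u₁, u₂⟫ = 0) (hv : ⟪v₁, v₂⟫ = 0) :
    ∃ g : Euc n ≃ₗᵢ[ℝ] Euc n, g u₁ = v₁ ∧ g u₂ = v₂ := by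
  set R₁ := Submodule.reflection (ℝ ∙ (u₁ - v₁))ᗮ with hR₁def
  have hR₁ : R₁ u₁ = v₁ := Submodule.reflection_sub (hu₁.trans hv₁.symm)
  set w := R₁ u₂ with hwdef
  have hw : ‖w‖ = 1 := by rw [hwdef, R₁.norm_map]; exact hu₂
  have hwv₁ : ⟪v₁, w⟫ = 0 := by
    rw [← hR₁, hwdef, LinearIsometryEquiv.inner_map_map]; exact hu
  set R₂ := Submodule.reflection (ℝ ∙ (w - v₂))ᗮ with hR₂def
  have hR₂ : R₂ w = v₂ := Submodule.reflection_sub (hw.trans hv₂.symm)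
  have hR₂v₁ : R₂ v₁ = v₁ := by
    apply Submodule.reflection_mem_subspace_eq_self
    have h1 : ⟪w, v₁⟫ = 0 := by rw [real_inner_comm]; exact hwv₁
    have h2 : ⟪v₂, v₁⟫ = 0 := by rw [real_inner_comm]; exact hv
    rw [Submodule.mem_orthogonal_singleton_iff_inner_right, inner_sub_left, h1, h2, sub_zero]
  exact ⟨R₁.trans R₂, by simp [hR₁, hR₂v₁], by simp [← hwdef, hR₂]⟩

lemma pair_inv {ν : Measure (Sph n)} (hν : IsHaarSphere ν) {u₁ u₂ v₁ v₂ : Euc n}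
    (hu₁ : ‖u₁‖ = 1) (hu₂ : ‖u₂‖ = 1) (hv₁ : ‖v₁‖ = 1) (hv₂ : ‖v₂‖ = 1)
    (hu : ⟪u₁, u₂⟫ = 0) (hv : ⟪v₁, v₂⟫ = 0) (φ : ℝ → ℝ → ℝ)
    (hφ : Continuous fun p : ℝ × ℝ => φ p.1 p.2) :
    ∫ x : Sph n, φ ⟪(x : Euc n), u₁⟫ ⟪(x : Euc n), u₂⟫ ∂ν
      = ∫ x : Sph n, φ ⟪(x : Euc n), v₁⟫ ⟪(x : Euc n), v₂⟫ ∂ν := by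
  obtain ⟨g, hg₁, hg₂⟩ := exists_rot_pair hu₁ hu₂ hv₁ hv₂ hu hv
  have hF : Continuous fun y : Euc n => φ ⟪y, v₁⟫ ⟪y, v₂⟫ := by
    exact hφ.comp (Continuous.prodMk (continuous_id.inner continuous_const)
      (continuous_id.inner continuous_const))
  have := haar_int_inv hν g _ hF
  rw [← this]
  congr 1; funext x
  rw [← hg₁, ← hg₂, LinearIsometryEquiv.inner_map_map, LinearIsometryEquiv.inner_map_map]

lemma single_inv {ν : Measure (Sph n)} (hν : IsHaarSphere ν) {u v : Euc n}
    (hu : ‖u‖ = 1) (hv : ‖v‖ = 1) (φ : ℝ → ℝ) (hφ : Continuous φ) :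
    ∫ x : Sph n, φ ⟪(x : Euc n), u⟫ ∂ν = ∫ x : Sph n, φ ⟪(x : Euc n), v⟫ ∂ν := by
  set g := Submodule.reflection (ℝ ∙ (u - v))ᗮ with hgdef
  have hg : g u = v := Submodule.reflection_sub (hu.trans hv.symm)
  have hF : Continuous fun y : Euc n => φ ⟪y, v⟫ :=
    hφ.comp (continuous_id.inner continuous_const)
  rw [← haar_int_inv hν g _ hF]
  congr 1; funext x
  rw [← hg, LinearIsometryEquiv.inner_map_map]

def ee {n : ℕ} (i : Fin n) : Euc n := EuclideanSpace.single i (1 : ℝ)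

lemma norm_ee (i : Fin n) : ‖ee i‖ = 1 := by simp [ee]

lemma inner_ee (x : Euc n) (i : Fin n) : ⟪x, ee i⟫ = x i := by
  simp [ee, EuclideanSpace.inner_single_right]

lemma inner_ee_ee {i j : Fin n} (h : i ≠ j) : ⟪ee i, ee j⟫ = 0 := by
  simp [ee, EuclideanSpace.inner_single_left, EuclideanSpace.single_apply, h.symm]

lemma sum_inner_ee_sq (x : Sph n) : ∑ i, ⟪(x : Euc n), ee i⟫ ^ 2 = 1 := by
  have hx : ‖(x : Euc n)‖ = 1 := by simpa using mem_sphere_zero_iff_norm.mp x.2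
  have : ∑ i, ⟪(x : Euc n), ee i⟫ ^ 2 = ⟪(x : Euc n), (x : Euc n)⟫ := by
    rw [PiLp.inner_apply]
    refine Finset.sum_congr rfl fun i _ => ?_
    rw [inner_ee]
    simp [sq, RCLike.inner_apply]
  rw [this, real_inner_self_eq_norm_sq, hx, one_pow]

lemma int_sq {ν : Measure (Sph n)} (hν : IsHaarSphere ν) {u : Euc n} (hu : ‖u‖ = 1) :
    ∫ x : Sph n, ⟪(x : Euc n), u⟫ ^ 2 ∂ν = 1 / n := by
  haveI := hν.1
  have hn : 0 < n := by
    by_contra h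
    interval_cases n
    · have : u = 0 := Subsingleton.elim _ _
      rw [this, norm_zero] at hu; norm_num at hu
  have key : ∀ i : Fin n, ∫ x : Sph n, ⟪(x : Euc n), ee i⟫ ^ 2 ∂ν
      = ∫ x : Sph n, ⟪(x : Euc n), u⟫ ^ 2 ∂ν :=
    fun i => single_inv hν (norm_ee i) hu (fun t => t ^ 2) (by fun_prop)
  have hint : ∀ i : Fin n, Integrable (fun x : Sph n => ⟪(x : Euc n), ee i⟫ ^ 2) ν :=
    fun i => integ_cont (f := fun y : Euc n => ⟪y, ee i⟫ ^ 2)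
      ((continuous_id.inner continuous_const).pow 2)
  have hsum : ∑ i, ∫ x : Sph n, ⟪(x : Euc n), ee i⟫ ^ 2 ∂ν = 1 := by
    rw [← integral_finset_sum _ (fun i _ => hint i)]
    have : (fun x : Sph n => ∑ i, ⟪(x : Euc n), ee i⟫ ^ 2) = fun _ => (1 : ℝ) := by
      funext x; exact sum_inner_ee_sq x
    rw [this, integral_const]; simp
  rw [Finset.sum_congr rfl (fun i _ => key i), Finset.sum_const, Finset.card_univ,
    Fintype.card_fin, nsmul_eq_mul] at hsum
  field_simp at hsum ⊢
  linarith [hsum]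

lemma cont_in (u : Euc n) : Continuous fun y : Euc n => ⟪y, u⟫ :=
  continuous_id.inner continuous_const

lemma int_quad {ν : Measure (Sph n)} (hν : IsHaarSphere ν) (hn : 2 ≤ n) {u : Euc n}
    (hu : ‖u‖ = 1) :
    ∫ x : Sph n, ⟪(x : Euc n), u⟫ ^ 4 ∂ν = 3 / ((n : ℝ) * (n + 2)) := by
  haveI := hν.1
  have hc4 : Continuous fun t : ℝ => t ^ 4 := continuous_pow 4
  set i0 : Fin n := ⟨0, by omega⟩ with hi0
  set i1 : Fin n := ⟨1, by omega⟩ with hi1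
  have h01 : i0 ≠ i1 := by simp [hi0, hi1, Fin.ext_iff]
  set D := ∫ x : Sph n, ⟪(x : Euc n), ee i0⟫ ^ 4 ∂ν with hD
  set E := ∫ x : Sph n, ⟪(x : Euc n), ee i0⟫ ^ 2 * ⟪(x : Euc n), ee i1⟫ ^ 2 ∂ν with hE
  set O1 := ∫ x : Sph n, ⟪(x : Euc n), ee i0⟫ ^ 3 * ⟪(x : Euc n), ee i1⟫ ∂ν with hO1
  set O2 := ∫ x : Sph n, ⟪(x : Euc n), ee i0⟫ * ⟪(x : Euc n), ee i1⟫ ^ 3 ∂ν with hO2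
  have hint : ∀ (a b : ℕ) (i j : Fin n),
      Integrable (fun x : Sph n => ⟪(x : Euc n), ee i⟫ ^ a * ⟪(x : Euc n), ee j⟫ ^ b) ν :=
    fun a b i j => integ_cont
      (f := fun y : Euc n => ⟪y, ee i⟫ ^ a * ⟪y, ee j⟫ ^ b)
      (((cont_in _).pow a).mul ((cont_in _).pow b))
  have I1 : Integrable (fun x : Sph n => ⟪(x : Euc n), ee i0⟫ ^ 4) ν := by
    have := hint 4 0 i0 i1; simpa using this
  have I5 : Integrable (fun x : Sph n => ⟪(x : Euc n), ee i1⟫ ^ 4) ν := by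
    have := hint 0 4 i0 i1; simpa using this
  have I2 : Integrable (fun x : Sph n => ⟪(x : Euc n), ee i0⟫ ^ 3 * ⟪(x : Euc n), ee i1⟫) ν := by
    have := hint 3 1 i0 i1; simpa using this
  have I3 : Integrable (fun x : Sph n => ⟪(x : Euc n), ee i0⟫ ^ 2 * ⟪(x : Euc n), ee i1⟫ ^ 2) ν :=
    hint 2 2 i0 i1
  have I4 : Integrable (fun x : Sph n => ⟪(x : Euc n), ee i0⟫ * ⟪(x : Euc n), ee i1⟫ ^ 3) ν := by
    have := hint 1 3 i0 i1; simpa using this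
  have hDu : ∫ x : Sph n, ⟪(x : Euc n), u⟫ ^ 4 ∂ν = D :=
    single_inv hν hu (norm_ee i0) (fun t => t ^ 4) hc4
  have hneg : ‖-ee i1‖ = 1 := by rw [norm_neg]; exact norm_ee i1
  have hperp : ⟪ee i0, ee i1⟫ = 0 := inner_ee_ee h01
  have hperpneg : ⟪ee i0, -ee i1⟫ = 0 := by rw [inner_neg_right, hperp, neg_zero]
  have hO1z : O1 = 0 := by
    have := pair_inv hν (norm_ee i0) (norm_ee i1) (norm_ee i0) hneg hperp hperpneg
      (fun s t => s ^ 3 * t) ((continuous_fst.pow 3).mul continuous_snd)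
    have h2 : ∫ x : Sph n, ⟪(x : Euc n), ee i0⟫ ^ 3 * ⟪(x : Euc n), -ee i1⟫ ∂ν = -O1 := by
      rw [hO1, ← integral_neg]
      congr 1; funext x; rw [inner_neg_right]; ring
    rw [← hO1, h2] at this
    linarith [this]
  have hO2z : O2 = 0 := by
    have := pair_inv hν (norm_ee i0) (norm_ee i1) (norm_ee i0) hneg hperp hperpneg
      (fun s t => s * t ^ 3) (continuous_fst.mul (continuous_snd.pow 3))
    have h2 : ∫ x : Sph n, ⟪(x : Euc n), ee i0⟫ * ⟪(x : Euc n), -ee i1⟫ ^ 3 ∂ν = -O2 := by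
      rw [hO2, ← integral_neg]
      congr 1; funext x; rw [inner_neg_right]; ring
    rw [← hO2, h2] at this
    linarith [this]
  have hD3E : D = 3 * E := by
    have hsq2 : Real.sqrt 2 ^ 2 = 2 := Real.sq_sqrt (by norm_num)
    have hs2pos : (0:ℝ) < Real.sqrt 2 := Real.sqrt_pos.mpr (by norm_num)
    set w : Euc n := (Real.sqrt 2)⁻¹ • (ee i0 + ee i1) with hwdef
    have hnormadd : ‖ee i0 + ee i1‖ = Real.sqrt 2 := by
      have h : ‖ee i0 + ee i1‖ ^ 2 = 2 := by
        rw [norm_add_sq_real, hperp, norm_ee, norm_ee]; ring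
      rw [← Real.sqrt_sq (norm_nonneg _), h]
    have hw : ‖w‖ = 1 := by
      rw [hwdef, norm_smul, hnormadd, norm_inv, Real.norm_eq_abs,
        abs_of_pos hs2pos, inv_mul_cancel₀ (ne_of_gt hs2pos)]
    have hDw : ∫ x : Sph n, ⟪(x : Euc n), w⟫ ^ 4 ∂ν = D :=
      single_inv hν hw (norm_ee i0) (fun t => t ^ 4) hc4
    have hDt : ∫ x : Sph n, ⟪(x : Euc n), ee i1⟫ ^ 4 ∂ν = D :=
      single_inv hν (norm_ee i1) (norm_ee i0) (fun t => t ^ 4) hc4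
    have hptw : (fun x : Sph n => ⟪(x : Euc n), w⟫ ^ 4)
        = fun x : Sph n =>
          (1/4) * ⟪(x : Euc n), ee i0⟫ ^ 4
          + ⟪(x : Euc n), ee i0⟫ ^ 3 * ⟪(x : Euc n), ee i1⟫
          + (3/2) * (⟪(x : Euc n), ee i0⟫ ^ 2 * ⟪(x : Euc n), ee i1⟫ ^ 2)
          + ⟪(x : Euc n), ee i0⟫ * ⟪(x : Euc n), ee i1⟫ ^ 3
          + (1/4) * ⟪(x : Euc n), ee i1⟫ ^ 4 := by
      funext x
      have hwx : ⟪(x : Euc n), w⟫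
          = (Real.sqrt 2)⁻¹ * (⟪(x : Euc n), ee i0⟫ + ⟪(x : Euc n), ee i1⟫) := by
        rw [hwdef, real_inner_smul_right, inner_add_right]
      have h4 : ((Real.sqrt 2)⁻¹) ^ 4 = 1 / 4 := by
        rw [inv_pow]
        have h44 : Real.sqrt 2 ^ 4 = 4 := by
          have : Real.sqrt 2 ^ 4 = (Real.sqrt 2 ^ 2) ^ 2 := by ring
          rw [this, hsq2]; norm_num
        rw [h44]; norm_num
      rw [hwx, mul_pow, h4]; ring
    have J2 : Integrable (fun x : Sph n => (1/4) * ⟪(x : Euc n), ee i0⟫ ^ 4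
        + ⟪(x : Euc n), ee i0⟫ ^ 3 * ⟪(x : Euc n), ee i1⟫) ν :=
      (I1.const_mul (1/4 : ℝ)).add I2
    have J3 : Integrable (fun x : Sph n => (1/4) * ⟪(x : Euc n), ee i0⟫ ^ 4
        + ⟪(x : Euc n), ee i0⟫ ^ 3 * ⟪(x : Euc n), ee i1⟫
        + (3/2) * (⟪(x : Euc n), ee i0⟫ ^ 2 * ⟪(x : Euc n), ee i1⟫ ^ 2)) ν :=
      J2.add (I3.const_mul (3/2 : ℝ))
    have J4 : Integrable (fun x : Sph n => (1/4) * ⟪(x : Euc n), ee i0⟫ ^ 4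
        + ⟪(x : Euc n), ee i0⟫ ^ 3 * ⟪(x : Euc n), ee i1⟫
        + (3/2) * (⟪(x : Euc n), ee i0⟫ ^ 2 * ⟪(x : Euc n), ee i1⟫ ^ 2)
        + ⟪(x : Euc n), ee i0⟫ * ⟪(x : Euc n), ee i1⟫ ^ 3) ν :=
      J3.add I4
    rw [hptw, integral_add J4 (I5.const_mul (1/4 : ℝ)), integral_add J3 I4,
      integral_add J2 (I3.const_mul (3/2 : ℝ)),
      integral_add (I1.const_mul (1/4 : ℝ)) I2,
      integral_const_mul, integral_const_mul, integral_const_mul,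
      ← hD, ← hO1, ← hE, ← hO2, hDt] at hDw
    rw [hO1z, hO2z] at hDw
    linarith [hDw]
  -- double sum over coordinates
  have hcong : ∀ i j : Fin n,
      (∫ x : Sph n, ⟪(x : Euc n), ee i⟫ ^ 2 * ⟪(x : Euc n), ee j⟫ ^ 2 ∂ν)
        = if i = j then D else E := by
    intro i j
    by_cases h : i = j
    · subst h
      simp only [if_pos]
      have h1 := single_inv hν (norm_ee i) (norm_ee i0) (fun t => t ^ 2 * t ^ 2)
        ((continuous_pow 2).mul (continuous_pow 2))
      rw [h1, hD]
      congr 1; funext x; ring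
    · simp only [if_neg h]
      rw [hE]
      exact pair_inv hν (norm_ee i) (norm_ee j) (norm_ee i0) (norm_ee i1)
        (inner_ee_ee h) (inner_ee_ee h01) (fun s t => s ^ 2 * t ^ 2)
        ((continuous_fst.pow 2).mul (continuous_snd.pow 2))
  have hsum1 : ∑ i : Fin n, ∑ j : Fin n,
      (∫ x : Sph n, ⟪(x : Euc n), ee i⟫ ^ 2 * ⟪(x : Euc n), ee j⟫ ^ 2 ∂ν) = 1 := by
    have hin : ∀ i : Fin n, Integrable
        (fun x : Sph n => ∑ j : Fin n, ⟪(x : Euc n), ee i⟫ ^ 2 * ⟪(x : Euc n), ee j⟫ ^ 2) ν :=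
      fun i => integrable_finset_sum _ (fun j _ => hint 2 2 i j)
    have step1 : ∀ i : Fin n, ∑ j : Fin n,
        (∫ x : Sph n, ⟪(x : Euc n), ee i⟫ ^ 2 * ⟪(x : Euc n), ee j⟫ ^ 2 ∂ν)
          = ∫ x : Sph n, ∑ j : Fin n, ⟪(x : Euc n), ee i⟫ ^ 2 * ⟪(x : Euc n), ee j⟫ ^ 2 ∂ν :=
      fun i => (integral_finset_sum _ (fun j _ => hint 2 2 i j)).symm
    rw [Finset.sum_congr rfl (fun i _ => step1 i),
      ← integral_finset_sum _ (fun i _ => hin i)]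
    have hptw2 : (fun x : Sph n => ∑ i : Fin n, ∑ j : Fin n,
        ⟪(x : Euc n), ee i⟫ ^ 2 * ⟪(x : Euc n), ee j⟫ ^ 2) = fun _ => (1 : ℝ) := by
      funext x
      rw [← Finset.sum_mul_sum, sum_inner_ee_sq x, one_mul]
    rw [hptw2, integral_const]; simp
  have heval : ∑ i : Fin n, ∑ j : Fin n, (if i = j then D else E)
      = (n : ℝ) * ((n : ℝ) * E + (D - E)) := by
    have hrow : ∀ i : Fin n, ∑ j : Fin n, (if i = j then D else E)
        = (n : ℝ) * E + (D - E) := by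
      intro i
      have : ∀ j : Fin n, (if i = j then D else E) = E + (if i = j then D - E else 0) := by
        intro j; by_cases h : i = j <;> simp [h]
      rw [Finset.sum_congr rfl (fun j _ => this j), Finset.sum_add_distrib,
        Finset.sum_ite_eq, Finset.sum_const, Finset.card_univ, Fintype.card_fin,
        nsmul_eq_mul]
      simp
    rw [Finset.sum_congr rfl (fun i _ => hrow i), Finset.sum_const, Finset.card_univ,
      Fintype.card_fin, nsmul_eq_mul]
  rw [Finset.sum_congr rfl (fun i _ => Finset.sum_congr rfl (fun j _ => hcong i j)),
    heval] at hsum1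
  have hnpos : (0:ℝ) < n := by
    have : (2:ℝ) ≤ n := by exact_mod_cast hn
    linarith
  have hEval : E = 1 / ((n : ℝ) * ((n:ℝ) + 2)) := by
    have hkey : (n : ℝ) * (((n:ℝ) + 2) * E) = 1 := by rw [hD3E] at hsum1; linarith [hsum1]
    field_simp
    linarith [hkey]
  rw [hDu, hD3E, hEval]
  field_simp

/-- Cauchy-Schwarz for integrals of bounded continuous nonnegative functions. -/
lemma cs_int {ν : Measure (Sph n)} [IsProbabilityMeasure ν] {F G : Sph n → ℝ}
    (hF : Continuous F) (hG : Continuous G) (hFn : ∀ x, 0 ≤ F x) (hGn : ∀ x, 0 ≤ G x)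
    (hFb : ∀ x, F x ≤ 1) (hGb : ∀ x, G x ≤ 1) :
    (∫ x, F x * G x ∂ν) ^ 2 ≤ (∫ x, F x ^ 2 ∂ν) * (∫ x, G x ^ 2 ∂ν) := by
  have hpq : Real.HolderConjugate 2 2 := Real.holderConjugate_iff.mpr ⟨one_lt_two, by norm_num⟩
  have hFm : MemLp F (ENNReal.ofReal 2) ν :=
    MemLp.of_bound hF.aestronglyMeasurable 1
      (Filter.Eventually.of_forall fun x => by
        rw [Real.norm_eq_abs, abs_of_nonneg (hFn x)]; exact hFb x)
  have hGm : MemLp G (ENNReal.ofReal 2) ν :=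
    MemLp.of_bound hG.aestronglyMeasurable 1
      (Filter.Eventually.of_forall fun x => by
        rw [Real.norm_eq_abs, abs_of_nonneg (hGn x)]; exact hGb x)
  have h := integral_mul_le_Lp_mul_Lq_of_nonneg hpq
    (Filter.Eventually.of_forall hFn) (Filter.Eventually.of_forall hGn) hFm hGm
  have hF2 : (fun x => F x ^ (2:ℝ)) = fun x => F x ^ 2 := by
    funext x
    rw [show (2:ℝ) = ((2:ℕ):ℝ) by norm_num, Real.rpow_natCast]
  have hG2 : (fun x => G x ^ (2:ℝ)) = fun x => G x ^ 2 := by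
    funext x
    rw [show (2:ℝ) = ((2:ℕ):ℝ) by norm_num, Real.rpow_natCast]
  rw [hF2, hG2] at h
  set a := ∫ x, F x ^ 2 ∂ν with ha
  set b := ∫ x, G x ^ 2 ∂ν with hb
  have han : 0 ≤ a := integral_nonneg fun x => sq_nonneg _
  have hbn : 0 ≤ b := integral_nonneg fun x => sq_nonneg _
  have h' : ∫ x, F x * G x ∂ν ≤ Real.sqrt a * Real.sqrt b := by
    rw [Real.sqrt_eq_rpow, Real.sqrt_eq_rpow]; exact h
  have hmn : 0 ≤ ∫ x, F x * G x ∂ν := integral_nonneg fun x => mul_nonneg (hFn x) (hGn x)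
  calc (∫ x, F x * G x ∂ν) ^ 2 ≤ (Real.sqrt a * Real.sqrt b) ^ 2 := by
        apply pow_le_pow_left₀ hmn h'
    _ = a * b := by rw [mul_pow, Real.sq_sqrt han, Real.sq_sqrt hbn]

lemma int_abs_lower {ν : Measure (Sph n)} (hν : IsHaarSphere ν) {u : Euc n}
    (hu : ‖u‖ = 1) :
    1 / (Real.sqrt 3 * Real.sqrt n) ≤ ∫ x : Sph n, |⟪(x : Euc n), u⟫| ∂ν := by
  haveI := hν.1
  have hcont : ∀ k : ℕ, Continuous fun y : Euc n => |⟪y, u⟫| ^ k :=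
    fun k => ((cont_in u).abs).pow k
  have hint : ∀ k : ℕ, Integrable (fun x : Sph n => |⟪(x : Euc n), u⟫| ^ k) ν :=
    fun k => integ_cont (hcont k)
  have hfb : ∀ x : Sph n, |⟪(x : Euc n), u⟫| ≤ 1 := by
    intro x
    have hx : ‖(x : Euc n)‖ = 1 := by simpa using mem_sphere_zero_iff_norm.mp x.2
    calc |⟪(x : Euc n), u⟫| ≤ ‖(x : Euc n)‖ * ‖u‖ := abs_real_inner_le_norm _ _
      _ = 1 := by rw [hx, hu, one_mul]
  have hfn : ∀ x : Sph n, 0 ≤ |⟪(x : Euc n), u⟫| := fun x => abs_nonneg _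
  have hn : 0 < n := by
    by_contra h
    interval_cases n
    · have : u = 0 := Subsingleton.elim _ _
      rw [this, norm_zero] at hu; norm_num at hu
  have hnR : (0:ℝ) < n := by exact_mod_cast hn
  set A := ∫ x : Sph n, |⟪(x : Euc n), u⟫| ∂ν with hA
  set B := ∫ x : Sph n, |⟪(x : Euc n), u⟫| ^ 2 ∂ν with hB
  set C := ∫ x : Sph n, |⟪(x : Euc n), u⟫| ^ 3 ∂ν with hC
  set Dm := ∫ x : Sph n, |⟪(x : Euc n), u⟫| ^ 4 ∂ν with hDm
  have hAn : 0 ≤ A := integral_nonneg hfn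
  have hCn : 0 ≤ C := integral_nonneg fun x => by positivity
  have hBval : B = 1 / n := by
    rw [hB, ← int_sq hν hu]
    congr 1; funext x; rw [sq_abs]
  have hAB : B ≤ A := by
    have h1 : Integrable (fun x : Sph n => |⟪(x : Euc n), u⟫|) ν := by
      have := hint 1; simpa using this
    apply integral_mono (hint 2) h1
    intro x
    simp only
    calc |⟪(x : Euc n), u⟫| ^ 2 = |⟪(x : Euc n), u⟫| * |⟪(x : Euc n), u⟫| := sq _
      _ ≤ 1 * |⟪(x : Euc n), u⟫| := mul_le_mul_of_nonneg_right (hfb x) (hfn x)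
      _ = |⟪(x : Euc n), u⟫| := one_mul _
  rcases lt_or_ge n 2 with h2 | h2
  · -- n = 1
    have hn1 : n = 1 := by omega
    subst hn1
    have h13 : (1:ℝ) ≤ Real.sqrt 3 := by
      rw [show (3:ℝ) = 3 by norm_num, ← Real.sqrt_one]
      exact Real.sqrt_le_sqrt (by norm_num)
    have : 1 / (Real.sqrt 3 * Real.sqrt 1) ≤ 1 := by
      rw [Real.sqrt_one, mul_one]
      rw [div_le_one (by linarith)]
      exact h13
    simp only [Nat.cast_one] at *
    calc 1 / (Real.sqrt 3 * Real.sqrt 1) ≤ 1 := this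
      _ = B := by rw [hBval]; norm_num
      _ ≤ A := hAB
  · -- main case n ≥ 2
    have hDval : Dm = 3 / ((n:ℝ) * (n + 2)) := by
      rw [hDm, ← int_quad hν h2 hu]
      congr 1; funext x
      rw [← abs_pow, abs_of_nonneg (by positivity : (0:ℝ) ≤ ⟪(x : Euc n), u⟫ ^ 4)]
    -- Cauchy-Schwarz twice
    have hcs1 : B ^ 2 ≤ A * C := by
      have key := cs_int (ν := ν)
        (F := fun x : Sph n => Real.sqrt |⟪(x : Euc n), u⟫|)
        (G := fun x : Sph n => |⟪(x : Euc n), u⟫| * Real.sqrt |⟪(x : Euc n), u⟫|)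
        (Real.continuous_sqrt.comp (((cont_in u).abs).comp continuous_subtype_val))
        ((((cont_in u).abs).comp continuous_subtype_val).mul
          (Real.continuous_sqrt.comp (((cont_in u).abs).comp continuous_subtype_val)))
        (fun x => Real.sqrt_nonneg _)
        (fun x => mul_nonneg (hfn x) (Real.sqrt_nonneg _))
        (fun x => Real.sqrt_le_one.mpr (hfb x))
        (fun x => mul_le_one₀ (hfb x) (Real.sqrt_nonneg _) (Real.sqrt_le_one.mpr (hfb x)))
      have e1 : (fun x : Sph n => Real.sqrt |⟪(x : Euc n), u⟫|
          * (|⟪(x : Euc n), u⟫| * Real.sqrt |⟪(x : Euc n), u⟫|))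
          = fun x : Sph n => |⟪(x : Euc n), u⟫| ^ 2 := by
        funext x
        rw [show Real.sqrt |⟪(x : Euc n), u⟫| * (|⟪(x : Euc n), u⟫| * Real.sqrt |⟪(x : Euc n), u⟫|)
          = (Real.sqrt |⟪(x : Euc n), u⟫| * Real.sqrt |⟪(x : Euc n), u⟫|) * |⟪(x : Euc n), u⟫| by ring,
          Real.mul_self_sqrt (hfn x)]
        ring
      have e2 : (fun x : Sph n => Real.sqrt |⟪(x : Euc n), u⟫| ^ 2)
          = fun x : Sph n => |⟪(x : Euc n), u⟫| := by
        funext x; rw [Real.sq_sqrt (hfn x)]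
      have e3 : (fun x : Sph n => (|⟪(x : Euc n), u⟫| * Real.sqrt |⟪(x : Euc n), u⟫|) ^ 2)
          = fun x : Sph n => |⟪(x : Euc n), u⟫| ^ 3 := by
        funext x
        rw [mul_pow, Real.sq_sqrt (hfn x)]
        ring
      rw [show (∫ x : Sph n, Real.sqrt |⟪(x : Euc n), u⟫|
          * (|⟪(x : Euc n), u⟫| * Real.sqrt |⟪(x : Euc n), u⟫|) ∂ν)
          = B by rw [hB, ← e1]] at key
      rw [show (∫ x : Sph n, Real.sqrt |⟪(x : Euc n), u⟫| ^ 2 ∂ν) = A by rw [hA, ← e2]] at key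
      rw [show (∫ x : Sph n, (|⟪(x : Euc n), u⟫| * Real.sqrt |⟪(x : Euc n), u⟫|) ^ 2 ∂ν)
          = C by rw [hC, ← e3]] at key
      exact key
    have hcs2 : C ^ 2 ≤ B * Dm := by
      have key := cs_int (ν := ν)
        (F := fun x : Sph n => |⟪(x : Euc n), u⟫|)
        (G := fun x : Sph n => |⟪(x : Euc n), u⟫| ^ 2)
        (((cont_in u).abs).comp continuous_subtype_val)
        ((((cont_in u).abs).pow 2).comp continuous_subtype_val)
        hfn (fun x => by positivity) hfb
        (fun x => by
          calc |⟪(x : Euc n), u⟫| ^ 2 ≤ 1 ^ 2 := by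
                exact pow_le_pow_left₀ (hfn x) (hfb x) 2
            _ = 1 := one_pow 2)
      have e1 : (fun x : Sph n => |⟪(x : Euc n), u⟫| * |⟪(x : Euc n), u⟫| ^ 2)
          = fun x : Sph n => |⟪(x : Euc n), u⟫| ^ 3 := by
        funext x; ring
      have e3 : (fun x : Sph n => (|⟪(x : Euc n), u⟫| ^ 2) ^ 2)
          = fun x : Sph n => |⟪(x : Euc n), u⟫| ^ 4 := by
        funext x; ring
      rw [show (∫ x : Sph n, |⟪(x : Euc n), u⟫| * |⟪(x : Euc n), u⟫| ^ 2 ∂ν)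
          = C by rw [hC, ← e1]] at key
      rw [show (∫ x : Sph n, (|⟪(x : Euc n), u⟫| ^ 2) ^ 2 ∂ν)
          = Dm by rw [hDm, ← e3]] at key
      exact key
    -- numeric conclusion
    have hn2R : (2:ℝ) ≤ n := by exact_mod_cast h2
    have hAsq : 1 / (3 * (n:ℝ)) ≤ A ^ 2 := by
      clear_value A B C Dm
      set N := (n:ℝ) with hNdef
      have hNpos : 0 < N := hnR
      have hN2 : 2 ≤ N := hn2R
      rw [hBval] at hcs1 hcs2
      rw [hDval] at hcs2
      have k1 : 1 ≤ A * C * N ^ 2 := by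
        have h := mul_le_mul_of_nonneg_right hcs1 (sq_nonneg N)
        have e : ((1:ℝ) / N) ^ 2 * N ^ 2 = 1 := by field_simp
        rw [e] at h; linarith [h]
      have k2 : C ^ 2 * (N ^ 2 * (N + 2)) ≤ 3 := by
        have h := mul_le_mul_of_nonneg_right hcs2
          (le_of_lt (by positivity : (0:ℝ) < N ^ 2 * (N + 2)))
        have e : (1:ℝ) / N * (3 / (N * (N + 2))) * (N ^ 2 * (N + 2)) = 3 := by
          field_simp
        rw [e] at h; linarith [h]
      have hA2n : 0 ≤ A ^ 2 := sq_nonneg A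
      have k1sq : 1 ≤ A ^ 2 * C ^ 2 * N ^ 4 := by
        nlinarith [k1, sq_nonneg (A * C * N ^ 2 - 1)]
      have k3 : (N + 2) * (A ^ 2 * C ^ 2 * N ^ 4) ≤ 3 * (A ^ 2 * N ^ 2) := by
        have h := mul_le_mul_of_nonneg_left k2 (mul_nonneg hA2n (sq_nonneg N))
        nlinarith [h]
      have k4 : N + 2 ≤ 3 * (A ^ 2 * N ^ 2) := by
        have h := mul_le_mul_of_nonneg_left k1sq (by linarith : (0:ℝ) ≤ N + 2)
        nlinarith [h, k3]
      rw [div_le_iff₀ (by positivity : (0:ℝ) < 3 * N)]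
      nlinarith [k4, hNpos, hA2n]
    have hr : (0:ℝ) ≤ 1 / (Real.sqrt 3 * Real.sqrt n) := by positivity
    have hrsq : (1 / (Real.sqrt 3 * Real.sqrt n)) ^ 2 = 1 / (3 * (n:ℝ)) := by
      rw [div_pow, mul_pow, Real.sq_sqrt (by norm_num : (0:ℝ) ≤ 3),
        Real.sq_sqrt (le_of_lt hnR), one_pow]
    rw [← Real.sqrt_sq hr, ← Real.sqrt_sq hAn]
    apply Real.sqrt_le_sqrt
    rw [hrsq]
    exact hAsq

lemma slab_bound {K : Set (Euc n)} (hKc : Convex ℝ K) (hKcp : IsCompact K)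
    (hK0 : (0 : Euc n) ∈ interior K) {b : ℝ} (hb : ∀ x : Euc n, ‖x‖ = 1 → gauge K x ≤ b)
    {x₀ : Euc n} (hx₀ : ‖x₀‖ = 1) (hgx₀ : gauge K x₀ = b) (hbpos : 0 < b) :
    ∀ y ∈ K, ⟪y, x₀⟫ ≤ 1 / b := by
  have hKnhds : K ∈ 𝓝 (0 : Euc n) := mem_interior_iff_mem_nhds.mp hK0
  have habs : Absorbent ℝ K := absorbent_nhds_zero hKnhds
  have h0K : (0 : Euc n) ∈ K := interior_subset hK0
  have hgK : ∀ w : Euc n, gauge K w ≤ b * ‖w‖ := by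
    intro w
    by_cases hw : w = 0
    · simp [hw, gauge_zero]
    · have hwn : (0:ℝ) < ‖w‖ := norm_pos_iff.mpr hw
      have hunit : ‖‖w‖⁻¹ • w‖ = 1 := by
        rw [norm_smul, norm_inv, norm_norm, inv_mul_cancel₀ (ne_of_gt hwn)]
      have hw' : w = ‖w‖ • (‖w‖⁻¹ • w) := by
        rw [smul_smul, mul_inv_cancel₀ (ne_of_gt hwn), one_smul]
      calc gauge K w = gauge K (‖w‖ • (‖w‖⁻¹ • w)) := by rw [← hw']
        _ = ‖w‖ * gauge K (‖w‖⁻¹ • w) := by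
            rw [gauge_smul_of_nonneg (norm_nonneg w), smul_eq_mul]
        _ ≤ ‖w‖ * b := by
            exact mul_le_mul_of_nonneg_left (hb _ hunit) (norm_nonneg w)
        _ = b * ‖w‖ := mul_comm _ _
  intro y hy
  by_contra hcon
  push_neg at hcon
  set t := ⟪y, x₀⟫ with ht
  have htpos : 1 / b < t := hcon
  have hbinv : (0:ℝ) < 1 / b := by positivity
  have hyn : 1 / b < ‖y‖ := by
    calc 1 / b < t := htpos
      _ ≤ |t| := le_abs_self t
      _ ≤ ‖y‖ * ‖x₀‖ := abs_real_inner_le_norm _ _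
      _ = ‖y‖ := by rw [hx₀, mul_one]
  have hynpos : (0:ℝ) < ‖y‖ := lt_trans hbinv hyn
  -- choose sigma
  set σ : ℝ := min (1/2) ((t - 1/b) / (b * ‖y‖ ^ 2)) with hσdef
  have hσpos : 0 < σ := by
    apply lt_min (by norm_num)
    apply div_pos (by linarith) (by positivity)
  have hσhalf : σ ≤ 1/2 := min_le_left _ _
  have hσy : σ * (b * ‖y‖ ^ 2) ≤ t - 1/b := by
    have := min_le_right (1/2) ((t - 1/b) / (b * ‖y‖ ^ 2))
    rw [← hσdef] at this
    calc σ * (b * ‖y‖ ^ 2) ≤ ((t - 1/b) / (b * ‖y‖ ^ 2)) * (b * ‖y‖ ^ 2) :=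
          mul_le_mul_of_nonneg_right this (by positivity)
      _ = t - 1/b := div_mul_cancel₀ _ (by positivity)
  -- the point x₀/b is NOT in the interior
  have hg1 : gauge K (b⁻¹ • x₀) = 1 := by
    rw [gauge_smul_of_nonneg (le_of_lt (inv_pos.mpr hbpos)), hgx₀, smul_eq_mul,
      inv_mul_cancel₀ (ne_of_gt hbpos)]
  have hnotin : b⁻¹ • x₀ ∉ interior K := by
    intro hmem
    have := (gauge_lt_one_iff_mem_interior hKc hKnhds).mpr hmem
    rw [hg1] at this
    exact lt_irrefl 1 this
  -- but we will show it IS in the interior: contradiction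
  apply hnotin
  have hnormx0b : ‖b⁻¹ • x₀‖ = 1 / b := by
    rw [norm_smul, hx₀, mul_one, norm_inv, Real.norm_eq_abs, abs_of_pos hbpos, one_div]
  have hrho_sq : ‖b⁻¹ • x₀ - σ • y‖ ^ 2 = 1/b^2 - 2*σ*t/b + σ^2*‖y‖^2 := by
    rw [norm_sub_sq_real, hnormx0b, norm_smul, real_inner_smul_left, real_inner_smul_right]
    have : ⟪x₀, y⟫ = t := by rw [ht, real_inner_comm]
    rw [this, Real.norm_eq_abs, abs_of_pos hσpos, mul_pow]
    field_simp
  have hlt : ‖b⁻¹ • x₀ - σ • y‖ ^ 2 < ((1 - σ)/b) ^ 2 := by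
    set β := 1/b with hβdef
    have hβpos : (0:ℝ) < β := hbinv
    have hbβ : b * β = 1 := by rw [hβdef]; field_simp
    have key2 : σ * ‖y‖^2 ≤ (t - β) * β := by
      have h := mul_le_mul_of_nonneg_right hσy (le_of_lt hβpos)
      have e : σ * (b * ‖y‖ ^ 2) * β = σ * ‖y‖^2 * (b * β) := by ring
      rw [e, hbβ, mul_one] at h
      exact h
    have e1 : (1:ℝ)/b^2 = β^2 := by rw [hβdef]; field_simp
    have e2 : 2*σ*t/b = 2*σ*t*β := by rw [hβdef]; ring
    have e3 : ((1 - σ)/b)^2 = (1-σ)^2 * β^2 := by rw [hβdef]; ring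
    rw [hrho_sq, e1, e2, e3]
    have hmul := mul_le_mul_of_nonneg_left key2 (le_of_lt hσpos)
    have htβ : β < t := htpos
    nlinarith [hmul, mul_pos (mul_pos hσpos hβpos) (sub_pos.mpr htβ),
      mul_pos hσpos hβpos, sq_nonneg (σ*β), hσpos, hσhalf]
  have hσlt1 : σ < 1 := lt_of_le_of_lt hσhalf (by norm_num)
  have h1σpos : (0:ℝ) < 1 - σ := by linarith
  have hρlt : ‖b⁻¹ • x₀ - σ • y‖ < (1 - σ)/b :=
    lt_of_pow_lt_pow_left₀ 2 (by positivity) hlt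
  set δ := (1 - σ)/b - ‖b⁻¹ • x₀ - σ • y‖ with hδdef
  have hδpos : 0 < δ := by rw [hδdef]; linarith
  rw [mem_interior]
  refine ⟨Metric.ball (b⁻¹ • x₀) δ, ?_, Metric.isOpen_ball, Metric.mem_ball_self hδpos⟩
  intro q hq
  rw [Metric.mem_ball, dist_eq_norm] at hq
  set r := (1 - σ)⁻¹ • (q - σ • y) with hrdef
  have hqr : ‖q - σ • y‖ < (1 - σ)/b := by
    calc ‖q - σ • y‖ = ‖(q - b⁻¹ • x₀) + (b⁻¹ • x₀ - σ • y)‖ := by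
          congr 1; abel
      _ ≤ ‖q - b⁻¹ • x₀‖ + ‖b⁻¹ • x₀ - σ • y‖ := norm_add_le _ _
      _ < δ + ‖b⁻¹ • x₀ - σ • y‖ := by linarith [hq]
      _ = (1 - σ)/b := by rw [hδdef]; ring
  have hrn : ‖r‖ < 1/b := by
    rw [hrdef, norm_smul, norm_inv, Real.norm_eq_abs, abs_of_pos h1σpos]
    calc (1 - σ)⁻¹ * ‖q - σ • y‖ < (1 - σ)⁻¹ * ((1 - σ)/b) :=
          mul_lt_mul_of_pos_left hqr (inv_pos.mpr h1σpos)
      _ = 1/b := by field_simp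
  have hrK : r ∈ K := by
    apply gauge_lt_one_subset_self hKc h0K habs
    have : gauge K r ≤ b * ‖r‖ := hgK r
    have : b * ‖r‖ < 1 := by
      calc b * ‖r‖ < b * (1/b) := mul_lt_mul_of_pos_left hrn hbpos
        _ = 1 := by field_simp
    simp only [Set.mem_setOf_eq]
    linarith [hgK r]
  have hqe : q = σ • y + (1 - σ) • r := by
    rw [hrdef, smul_smul, mul_inv_cancel₀ (ne_of_gt h1σpos), one_smul]
    abel
  rw [hqe]
  exact hKc hy hrK (le_of_lt hσpos) (le_of_lt h1σpos) (by ring)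

lemma gauge_ge_inner {K : Set (Euc n)} (hKc : Convex ℝ K) (hKs : K = -K) (hKcp : IsCompact K)
    (hK0 : (0 : Euc n) ∈ interior K) {b : ℝ} (hb : ∀ x : Euc n, ‖x‖ = 1 → gauge K x ≤ b)
    {x₀ : Euc n} (hx₀ : ‖x₀‖ = 1) (hgx₀ : gauge K x₀ = b) (hbpos : 0 < b) :
    ∀ w : Euc n, b * |⟪w, x₀⟫| ≤ gauge K w := by
  have hKnhds : K ∈ 𝓝 (0 : Euc n) := mem_interior_iff_mem_nhds.mp hK0
  have habs : Absorbent ℝ K := absorbent_nhds_zero hKnhds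
  have h0K : (0 : Euc n) ∈ K := interior_subset hK0
  have hslab : ∀ y ∈ K, |⟪y, x₀⟫| ≤ 1 / b := by
    intro y hy
    have h1 : ⟪y, x₀⟫ ≤ 1 / b := slab_bound hKc hKcp hK0 hb hx₀ hgx₀ hbpos y hy
    have hyneg : -y ∈ K := by
      rw [hKs, Set.mem_neg, neg_neg]; exact hy
    have h2 : ⟪-y, x₀⟫ ≤ 1 / b := slab_bound hKc hKcp hK0 hb hx₀ hgx₀ hbpos _ hyneg
    rw [inner_neg_left] at h2
    rw [abs_le]
    constructor <;> linarith
  intro w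
  by_contra hcon
  push_neg at hcon
  -- gauge K w < b * |⟪w, x₀⟫|, pick c strictly between
  set c := (gauge K w + b * |⟪w, x₀⟫|) / 2 with hcdef
  have hgc : gauge K w < c := by
    rw [hcdef]; linarith [hcon]
  have hclt : c < b * |⟪w, x₀⟫| := by
    rw [hcdef]; linarith [hcon]
  have hcpos : 0 < c := lt_of_le_of_lt (gauge_nonneg w) hgc
  have hmem : c⁻¹ • w ∈ K := by
    apply gauge_lt_one_subset_self hKc h0K habs
    simp only [Set.mem_setOf_eq]
    rw [gauge_smul_of_nonneg (le_of_lt (inv_pos.mpr hcpos)), smul_eq_mul]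
    rw [inv_mul_lt_one₀ hcpos]
    exact hgc
  have := hslab _ hmem
  rw [real_inner_smul_left, abs_mul, abs_of_pos (inv_pos.mpr hcpos)] at this
  have hfin : b * |⟪w, x₀⟫| ≤ c := by
    have h := mul_le_mul_of_nonneg_left this (le_of_lt (mul_pos hbpos hcpos))
    have e1 : b * c * (c⁻¹ * |⟪w, x₀⟫|) = b * |⟪w, x₀⟫| := by
      field_simp
    have e2 : b * c * (1/b) = c := by
      field_simp
    rw [e1, e2] at h
    exact h
  linarith

lemma b_pos {K : Set (Euc n)} (hKc : Convex ℝ K) (hKcp : IsCompact K)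
    (hK0 : (0 : Euc n) ∈ interior K) {b : ℝ}
    {x₀ : Euc n} (hx₀ : ‖x₀‖ = 1) (hgx₀ : gauge K x₀ = b) : 0 < b := by
  have hKnhds : K ∈ 𝓝 (0 : Euc n) := mem_interior_iff_mem_nhds.mp hK0
  have habs : Absorbent ℝ K := absorbent_nhds_zero hKnhds
  have h0K : (0 : Euc n) ∈ K := interior_subset hK0
  obtain ⟨R, hR⟩ := (Metric.isBounded_iff_subset_closedBall 0).mp hKcp.isBounded
  set R' := max R 1 with hR'def
  have hR'pos : (0:ℝ) < R' := lt_of_lt_of_le one_pos (le_max_right _ _)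
  have hsub : K ⊆ Metric.closedBall 0 R' :=
    hR.trans (Metric.closedBall_subset_closedBall (le_max_left _ _))
  set z := (2 * R') • x₀ with hzdef
  have hz : z ∉ K := by
    intro hzK
    have := hsub hzK
    rw [Metric.mem_closedBall, dist_zero_right, hzdef, norm_smul, hx₀, mul_one,
      Real.norm_eq_abs, abs_of_pos (by linarith)] at this
    linarith
  have hge := one_le_gauge_of_notMem (hKc.starConvex h0K) (habs z) hz
  rw [hzdef, gauge_smul_of_nonneg (by linarith : (0:ℝ) ≤ 2 * R'), smul_eq_mul, hgx₀] at hge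
  nlinarith [hge, hR'pos]

end Aux

/-- There is a universal constant `c' > 0` with `M(K)/b(K) ≥ c'/√n` for every symmetric
convex body `K ⊂ ℝⁿ`. -/
theorem stmt_8 :
    ∃ c' : ℝ, 0 < c' ∧ ∀ n : ℕ, 0 < n →
      ∀ K : Set (Euc n), Convex ℝ K → K = -K → IsCompact K → (0 : Euc n) ∈ interior K →
      ∀ ν : Measure (Sph n), IsHaarSphere ν →
      ∀ M b : ℝ, M = ∫ x : Sph n, gauge K (x : Euc n) ∂ν →
      ((∀ x : Euc n, ‖x‖ = 1 → gauge K x ≤ b) ∧ ∃ x : Euc n, ‖x‖ = 1 ∧ gauge K x = b) →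
      c' / Real.sqrt n ≤ M / b := by
  have hs3 : (0:ℝ) < Real.sqrt 3 := Real.sqrt_pos.mpr (by norm_num)
  refine ⟨1 / Real.sqrt 3, by positivity, ?_⟩
  intro n hn K hKc hKs hKcp hK0 ν hν M b hM hpair
  obtain ⟨hb, x₀, hx₀, hgx₀⟩ := hpair
  haveI := hν.1
  have hbpos : 0 < b := b_pos hKc hKcp hK0 hx₀ hgx₀
  have hKnhds : K ∈ 𝓝 (0 : Euc n) := mem_interior_iff_mem_nhds.mp hK0
  have hlow := gauge_ge_inner hKc hKs hKcp hK0 hb hx₀ hgx₀ hbpos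
  have hA := int_abs_lower hν hx₀
  have hMint : Integrable (fun x : Sph n => gauge K (x : Euc n)) ν :=
    integ_cont (continuous_gauge hKc hKnhds)
  have hAint : Integrable (fun x : Sph n => b * |⟪(x : Euc n), x₀⟫|) ν :=
    (integ_cont (f := fun y : Euc n => |⟪y, x₀⟫|) ((cont_in x₀).abs)).const_mul b
  have hMA : b * (∫ x : Sph n, |⟪(x : Euc n), x₀⟫| ∂ν) ≤ M := by
    rw [hM, ← integral_const_mul]
    apply integral_mono hAint hMint
    intro x
    exact hlow (x : Euc n)
  have hsn : (0:ℝ) < Real.sqrt n := Real.sqrt_pos.mpr (by exact_mod_cast hn)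
  rw [div_div, le_div_iff₀ hbpos]
  calc 1 / (Real.sqrt 3 * Real.sqrt n) * b
      ≤ (∫ x : Sph n, |⟪(x : Euc n), x₀⟫| ∂ν) * b :=
        mul_le_mul_of_nonneg_right hA (le_of_lt hbpos)
    _ = b * ∫ x : Sph n, |⟪(x : Euc n), x₀⟫| ∂ν := mul_comm _ _
    _ ≤ M := hMA
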